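/- (Mean and variance of the Cride maximum likelihood estimator.) Let d > 0, let n ≥ 1 and L ≥ 2 be integers with n(L−1) > 2. Let (γ_{i,l}) for i = 1,…,n and l = 2,…,L be jointly independent random variables, with γ_{i,l} following the Exponential((l−1)·d) distribution. Define d̂_L = (n(L−1)−1) / (Σ_{i=1}^{n} Σ_{l=2}^{L} (l−1)·γ_{i,l}). Then d̂_L is square-integrable, E[d̂_L] = d, and Var[d̂_L] = d² / (n(L−1) − 2). -/

import Mathlib

open MeasureTheory ProbabilityTheory Real Finset
open Set
open scoped ENNReal NNReal

lemma crideAux_integrableOn_pow_exp {a s : ℝ} (ha : 0 < a) (hs : 0 < s) :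
    IntegrableOn (fun t : ℝ => t ^ (a - 1) * Real.exp (-(s * t))) (Ioi 0) := by
  have h0 : IntegrableOn (fun x : ℝ => Real.exp (-x) * x ^ (a - 1)) (Ioi 0) :=
    Real.GammaIntegral_convergent ha
  have h1 : IntegrableOn (fun t : ℝ => Real.exp (-(s * t)) * (s * t) ^ (a - 1)) (Ioi 0) := by
    have := (integrableOn_Ioi_comp_mul_left_iff
      (fun x : ℝ => Real.exp (-x) * x ^ (a - 1)) 0 hs).2
    simpa using this (by simpa using h0)
  have h2 : IntegrableOn (fun t : ℝ => s ^ (1 - a) * (Real.exp (-(s * t)) * (s * t) ^ (a - 1))) (Ioi 0) :=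
    h1.const_mul (s ^ (1 - a))
  refine h2.congr_fun (fun t ht => ?_) measurableSet_Ioi
  have ht' : (0:ℝ) < t := ht
  beta_reduce
  rw [Real.mul_rpow hs.le ht'.le]
  rw [show s ^ (1 - a) * (Real.exp (-(s * t)) * (s ^ (a - 1) * t ^ (a - 1)))
      = (s ^ (1 - a) * s ^ (a - 1)) * (t ^ (a - 1) * Real.exp (-(s * t))) by ring,
    ← Real.rpow_add hs]
  norm_num

lemma crideAux_integral_exp_neg_mul {s : ℝ} (hs : 0 < s) :
    ∫ t in Ioi (0:ℝ), Real.exp (-(s * t)) = 1 / s := by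
  have := Real.integral_rpow_mul_exp_neg_mul_Ioi zero_lt_one hs
  simpa [Real.Gamma_one, Real.rpow_one] using this

lemma crideAux_integral_mul_exp_neg_mul {s : ℝ} (hs : 0 < s) :
    ∫ t in Ioi (0:ℝ), t * Real.exp (-(s * t)) = 1 / s ^ 2 := by
  have := Real.integral_rpow_mul_exp_neg_mul_Ioi (by norm_num : (0:ℝ) < 2) hs
  have h2 : ((1:ℝ)/s) ^ (2:ℝ) = 1 / s ^ 2 := by
    rw [show (2:ℝ) = ((2:ℕ):ℝ) by norm_num, Real.rpow_natCast]
    simp [div_pow]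
  simpa [show (2:ℝ)-1 = 1 by norm_num, Real.Gamma_two, Real.rpow_one, h2] using this

lemma crideAux_integral_exp_expMeasure {r u : ℝ} (hr : 0 < r) (hu : u < r) :
    ∫ x, Real.exp (u * x) ∂(expMeasure r) = r / (r - u) := by
  have hsub : 0 < r - u := by linarith
  have hmeq : expMeasure r
      = volume.withDensity (fun x => ((exponentialPDFReal r x).toNNReal : ℝ≥0∞)) := rfl
  rw [hmeq, integral_withDensity_eq_integral_smul
    ((measurable_exponentialPDFReal r).real_toNNReal) (fun x => Real.exp (u * x))]
  have hsmul : (fun x => (exponentialPDFReal r x).toNNReal • Real.exp (u * x))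
      = fun x => exponentialPDFReal r x * Real.exp (u * x) := by
    funext x
    rw [NNReal.smul_def, Real.coe_toNNReal _ (exponentialPDFReal_nonneg hr x), smul_eq_mul]
  rw [hsmul]
  set g : ℝ → ℝ := fun x => exponentialPDFReal r x * Real.exp (u * x) with hg
  have hgIoi : EqOn (fun x => r * Real.exp (-((r - u) * x))) g (Ioi 0) := by
    intro x hx
    have hx' : (0:ℝ) ≤ x := le_of_lt hx
    simp only [hg, exponentialPDFReal, gammaPDFReal, if_pos hx']
    rw [Real.Gamma_one, show (1:ℝ) - 1 = 0 from sub_self 1, Real.rpow_zero, Real.rpow_one,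
      div_one, mul_one, mul_assoc, ← Real.exp_add]
    congr 1
    ring
  have hIoi : IntegrableOn g (Ioi 0) := by
    have h0 : IntegrableOn (fun x => r * Real.exp (-((r - u) * x))) (Ioi (0:ℝ)) := by
      have h1 : IntegrableOn (fun x => r * Real.exp (-(r - u) * x)) (Ioi (0:ℝ)) :=
        (exp_neg_integrableOn_Ioi 0 hsub).const_mul r
      refine h1.congr_fun (fun x _ => ?_) measurableSet_Ioi
      ring_nf
    exact h0.congr_fun hgIoi measurableSet_Ioi
  have haeIic : g =ᵐ[volume.restrict (Iic (0:ℝ))] 0 := by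
    have h1 : ∀ᵐ x ∂(volume.restrict (Iic (0:ℝ))), x ∈ Iic (0:ℝ) :=
      ae_restrict_mem measurableSet_Iic
    have h2 : ∀ᵐ x ∂(volume.restrict (Iic (0:ℝ))), x ≠ 0 := by
      refine ae_restrict_of_ae ?_
      rw [ae_iff]
      have : {x : ℝ | ¬ x ≠ 0} = {0} := by ext x; simp
      rw [this]
      exact Real.volume_singleton
    filter_upwards [h1, h2] with x hx hne
    have hxneg : x < 0 := lt_of_le_of_ne hx hne
    simp only [hg, exponentialPDFReal, gammaPDFReal, if_neg (not_le.2 hxneg), zero_mul,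
      Pi.zero_apply]
  have hIic : IntegrableOn g (Iic 0) := by
    rw [IntegrableOn, integrable_congr haeIic]
    exact integrable_zero _ _ _
  have hInt : Integrable g := by
    rw [← integrableOn_univ, ← Set.Iic_union_Ioi (a := (0:ℝ))]
    exact hIic.union hIoi
  have hIic0 : ∫ x in Iic (0:ℝ), g x = 0 := by
    rw [integral_congr_ae haeIic]
    simp
  have hsplit : ∫ x, g x = ∫ x in Ioi 0, g x := by
    rw [← integral_add_compl measurableSet_Ioi hInt, compl_Ioi, hIic0, add_zero]
  rw [hsplit, setIntegral_congr_fun measurableSet_Ioi hgIoi.symm, integral_const_mul,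
    crideAux_integral_exp_neg_mul hsub]
  field_simp

lemma crideAux_shift (f : ℝ → ℝ) (d : ℝ) :
    ∫ x in Ioi d, f x = ∫ x in Ioi (0:ℝ), f (x + d) := by
  have hmp : MeasurePreserving (fun x : ℝ => x + d) volume volume :=
    measurePreserving_add_right volume d
  have hemb : MeasurableEmbedding (fun x : ℝ => x + d) :=
    (Homeomorph.addRight d).measurableEmbedding
  have := hmp.setIntegral_image_emb hemb f (Ioi 0)
  rwa [Set.image_add_const_Ioi, zero_add] at this

lemma crideAux_shift_integrable {f : ℝ → ℝ} {d : ℝ} (hf : IntegrableOn f (Ioi d)) :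
    IntegrableOn (fun x => f (x + d)) (Ioi (0:ℝ)) := by
  have hmp : MeasurePreserving (fun x : ℝ => x + d) volume volume :=
    measurePreserving_add_right volume d
  have hemb : MeasurableEmbedding (fun x : ℝ => x + d) :=
    (Homeomorph.addRight d).measurableEmbedding
  have h2 := hmp.restrict_image_emb hemb (Ioi 0)
  rw [Set.image_add_const_Ioi, zero_add] at h2
  exact (h2.integrable_comp_emb hemb).2 hf

lemma crideAux_B1 {d k : ℝ} (hd : 0 < d) (hk : 1 < k) :
    IntegrableOn (fun t : ℝ => (d + t) ^ (-k)) (Ioi 0) ∧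
    ∫ t in Ioi (0:ℝ), (d + t) ^ (-k) = d ^ (1 - k) / (k - 1) := by
  have hk' : -k < -1 := by linarith
  have hint : IntegrableOn (fun x : ℝ => x ^ (-k)) (Ioi d) := integrableOn_Ioi_rpow_of_lt hk' hd
  constructor
  · have := crideAux_shift_integrable hint
    refine this.congr_fun (fun t _ => ?_) measurableSet_Ioi
    rw [add_comm]
  · have h1 := crideAux_shift (fun x : ℝ => x ^ (-k)) d
    have h2 := integral_Ioi_rpow_of_lt hk' hd
    rw [h1] at h2
    have h3 : ∫ t in Ioi (0:ℝ), (d + t) ^ (-k) = ∫ t in Ioi (0:ℝ), (t + d) ^ (-k) := by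
      congr 1; funext t; rw [add_comm]
    rw [h3, h2, show (-k + 1 : ℝ) = -(k - 1) by ring, show d ^ (-(k-1)) = d ^ (1-k) by
      norm_num, neg_div_neg_eq]

lemma crideAux_B2 {d k : ℝ} (hd : 0 < d) (hk : 2 < k) :
    IntegrableOn (fun t : ℝ => t * (d + t) ^ (-k)) (Ioi 0) ∧
    ∫ t in Ioi (0:ℝ), t * (d + t) ^ (-k) = d ^ (2 - k) / ((k - 1) * (k - 2)) := by
  have hk1 : (1:ℝ) < k := by linarith
  have hk' : -k < -1 := by linarith
  have hk'' : 1 - k < -1 := by linarith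
  have hint1 : IntegrableOn (fun x : ℝ => x ^ (1 - k)) (Ioi d) := integrableOn_Ioi_rpow_of_lt hk'' hd
  have hint2 : IntegrableOn (fun x : ℝ => d * x ^ (-k)) (Ioi d) :=
    (integrableOn_Ioi_rpow_of_lt hk' hd).const_mul d
  have heq : EqOn (fun x : ℝ => x ^ (1 - k) - d * x ^ (-k)) (fun x : ℝ => (x - d) * x ^ (-k))
      (Ioi d) := by
    intro x hx
    have hx' : (0:ℝ) < x := lt_trans hd hx
    simp only
    rw [show (1 - k : ℝ) = 1 + (-k) by ring, Real.rpow_add hx', Real.rpow_one]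
    ring
  have hintf : IntegrableOn (fun x : ℝ => (x - d) * x ^ (-k)) (Ioi d) := by
    have hsub : IntegrableOn (fun x : ℝ => x ^ (1 - k) - d * x ^ (-k)) (Ioi d) := hint1.sub hint2
    exact hsub.congr_fun heq measurableSet_Ioi
  constructor
  · have := crideAux_shift_integrable hintf
    refine this.congr_fun (fun t _ => ?_) measurableSet_Ioi
    show (t + d - d) * (t + d) ^ (-k) = t * (d + t) ^ (-k)
    rw [add_sub_cancel_right, add_comm]
  · have h1 := crideAux_shift (fun x : ℝ => (x - d) * x ^ (-k)) d
    have h3 : ∫ t in Ioi (0:ℝ), t * (d + t) ^ (-k)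
        = ∫ t in Ioi (0:ℝ), (t + d - d) * (t + d) ^ (-k) := by
      congr 1; funext t; rw [add_sub_cancel_right, add_comm]
    rw [h3, ← h1, setIntegral_congr_fun measurableSet_Ioi heq.symm,
      integral_sub hint1 hint2, integral_const_mul, integral_Ioi_rpow_of_lt hk'' hd,
      integral_Ioi_rpow_of_lt hk' hd]
    have e1 : (1 - k + 1 : ℝ) = -(k - 2) := by ring
    have e2 : (-k + 1 : ℝ) = -(k - 1) := by ring
    rw [e1, e2, show d ^ (-(k-2)) = d ^ (2-k) by norm_num, show d ^ (-(k-1)) = d ^ (1-k) by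
      norm_num, neg_div_neg_eq, neg_div_neg_eq]
    have hd2 : d * d ^ (1 - k) = d ^ (2 - k) := by
      rw [show (2 - k : ℝ) = 1 + (1 - k) by ring, Real.rpow_add hd, Real.rpow_one]
    rw [show d * (d ^ (1 - k) / (k - 1)) = d ^ (2 - k) / (k - 1) by rw [← hd2]; ring]
    have hne1 : k - 1 ≠ 0 := by linarith
    have hne2 : k - 2 ≠ 0 := by linarith
    field_simp
    ring

lemma crideAux_moment {Ω : Type*} [MeasurableSpace Ω] (P : Measure Ω) [IsProbabilityMeasure P]
    {S : Ω → ℝ} (hSm : Measurable S) (hS : ∀ᵐ ω ∂P, 0 < S ω) {a : ℝ} (ha : 0 < a) :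
    ENNReal.ofReal (Real.Gamma a) * ∫⁻ ω, ENNReal.ofReal (S ω ^ (-a)) ∂P
      = ∫⁻ t in Ioi (0:ℝ), ENNReal.ofReal (t ^ (a - 1) * mgf S P (-t)) := by
  have hGnn : 0 ≤ Real.Gamma a := Real.Gamma_nonneg_of_nonneg ha.le
  have hmeas1 : Measurable fun ω => ENNReal.ofReal (S ω ^ (-a)) :=
    (hSm.pow_const (-a)).ennreal_ofReal
  have hFmeas : Measurable fun p : Ω × ℝ =>
      ENNReal.ofReal (p.2 ^ (a - 1) * Real.exp (-(S p.1 * p.2))) := by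
    apply Measurable.ennreal_ofReal
    exact (measurable_snd.pow_const (a-1)).mul
      (((hSm.comp measurable_fst).mul measurable_snd).neg.exp)
  calc ENNReal.ofReal (Real.Gamma a) * ∫⁻ ω, ENNReal.ofReal (S ω ^ (-a)) ∂P
      = ∫⁻ ω, ENNReal.ofReal (Real.Gamma a * S ω ^ (-a)) ∂P := by
        rw [← lintegral_const_mul _ hmeas1]
        congr 1; funext ω
        rw [ENNReal.ofReal_mul hGnn]
    _ = ∫⁻ ω, (∫⁻ t in Ioi (0:ℝ), ENNReal.ofReal (t ^ (a - 1) * Real.exp (-(S ω * t)))) ∂P := by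
        refine lintegral_congr_ae ?_
        filter_upwards [hS] with ω hω
        have hmain := Real.integral_rpow_mul_exp_neg_mul_Ioi ha hω
        have hval : Real.Gamma a * S ω ^ (-a)
            = ∫ t in Ioi (0:ℝ), t ^ (a - 1) * Real.exp (-(S ω * t)) := by
          rw [hmain, one_div, Real.inv_rpow hω.le, ← Real.rpow_neg hω.le, mul_comm]
        rw [hval, ofReal_integral_eq_lintegral_ofReal (crideAux_integrableOn_pow_exp ha hω) ?_]
        filter_upwards [ae_restrict_mem measurableSet_Ioi] with t ht
        exact mul_nonneg (Real.rpow_nonneg (le_of_lt ht) _) (Real.exp_pos _).le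
    _ = ∫⁻ t in Ioi (0:ℝ), ∫⁻ ω, ENNReal.ofReal (t ^ (a - 1) * Real.exp (-(S ω * t))) ∂P := by
        exact lintegral_lintegral_swap
          (f := fun ω t => ENNReal.ofReal (t ^ (a - 1) * Real.exp (-(S ω * t))))
          (hFmeas.aemeasurable)
    _ = ∫⁻ t in Ioi (0:ℝ), ENNReal.ofReal (t ^ (a - 1) * mgf S P (-t)) := by
        refine lintegral_congr_ae ?_
        filter_upwards [ae_restrict_mem measurableSet_Ioi] with t ht
        have ht' : (0:ℝ) < t := ht
        have htnn : 0 ≤ t ^ (a - 1) := Real.rpow_nonneg ht'.le _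
        have hint : Integrable (fun ω => Real.exp (-(S ω * t))) P := by
          refine Integrable.mono' (integrable_const 1)
            ((hSm.mul measurable_const).neg.exp.aestronglyMeasurable) ?_
          filter_upwards [hS] with ω hω
          rw [Real.norm_eq_abs, abs_of_pos (Real.exp_pos _)]
          exact Real.exp_le_one_iff.2 (by nlinarith)
        have hexp : ∫⁻ ω, ENNReal.ofReal (Real.exp (-(S ω * t))) ∂P
            = ENNReal.ofReal (mgf S P (-t)) := by
          rw [← ofReal_integral_eq_lintegral_ofReal hint
            (ae_of_all _ fun ω => (Real.exp_pos _).le)]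
          congr 1
          rw [mgf]
          congr 1; funext ω; congr 1; ring
        calc ∫⁻ ω, ENNReal.ofReal (t ^ (a - 1) * Real.exp (-(S ω * t))) ∂P
            = ∫⁻ ω, ENNReal.ofReal (t ^ (a - 1)) * ENNReal.ofReal (Real.exp (-(S ω * t))) ∂P := by
              congr 1; funext ω; rw [ENNReal.ofReal_mul htnn]
          _ = ENNReal.ofReal (t ^ (a - 1)) * ∫⁻ ω, ENNReal.ofReal (Real.exp (-(S ω * t))) ∂P :=
              lintegral_const_mul _ ((hSm.mul measurable_const).neg.exp.ennreal_ofReal)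
          _ = ENNReal.ofReal (t ^ (a - 1) * mgf S P (-t)) := by
              rw [hexp, ← ENNReal.ofReal_mul htnn]

set_option maxHeartbeats 2000000 in
/-- **Mean and variance of the Cride maximum likelihood estimator.**
Let `d > 0`, `n ≥ 1`, `L ≥ 2` with `n(L−1) > 2`. Let `γ (i, j)` for `i : Fin n`,
`j : Fin (L-1)` (encoding the pair `(i, l)` with `l = j + 2 ∈ {2, …, L}`, so that
`l − 1 = j + 1`) be jointly independent random variables with
`γ (i, j) ~ Exponential((j+1)·d)`. Define
`d̂_L = (n(L−1) − 1) / (∑ i ∑ j (j+1)·γ (i, j))`. Then `d̂_L` is square-integrable,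
`E[d̂_L] = d`, and `Var[d̂_L] = d² / (n(L−1) − 2)`. -/
theorem cride_mle_mean_variance
    {Ω : Type*} [MeasurableSpace Ω] (P : Measure Ω) [IsProbabilityMeasure P]
    (d : ℝ) (hd : 0 < d) (n L : ℕ) (hn : 1 ≤ n) (hL : 2 ≤ L) (hnL : 2 < n * (L - 1))
    (γ : Fin n × Fin (L - 1) → Ω → ℝ) (hγmeas : ∀ p, Measurable (γ p))
    (hindep : iIndepFun γ P)
    (hlaw : ∀ p : Fin n × Fin (L - 1),
      Measure.map (γ p) P = expMeasure (((p.2 : ℕ) + 1) * d)) :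
    MemLp (fun ω => ((n * (L - 1) : ℕ) - 1 : ℝ) /
        ∑ p : Fin n × Fin (L - 1), ((p.2 : ℕ) + 1 : ℝ) * γ p ω) 2 P ∧
    ∫ ω, ((n * (L - 1) : ℕ) - 1 : ℝ) /
        ∑ p : Fin n × Fin (L - 1), ((p.2 : ℕ) + 1 : ℝ) * γ p ω ∂P = d ∧
    variance (fun ω => ((n * (L - 1) : ℕ) - 1 : ℝ) /
        ∑ p : Fin n × Fin (L - 1), ((p.2 : ℕ) + 1 : ℝ) * γ p ω) P =
      d ^ 2 / ((n * (L - 1) : ℕ) - 2 : ℝ) := by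
  classical
  -- basic numerics
  have hk3 : 3 ≤ n * (L - 1) := hnL
  have hcard : Fintype.card (Fin n × Fin (L - 1)) = n * (L - 1) := by
    simp [Fintype.card_prod]
  set kR : ℝ := ((n * (L - 1) : ℕ) : ℝ) with hkR
  have hkR3 : (3:ℝ) ≤ kR := by
    rw [hkR]; exact_mod_cast hk3
  have hkR1 : (0:ℝ) < kR - 1 := by linarith
  have hkR2 : (0:ℝ) < kR - 2 := by linarith
  -- the weights
  have hc : ∀ p : (Fin n × Fin (L - 1)), (0:ℝ) < ((p.2 : ℕ) + 1 : ℝ) := fun p => by positivity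
  -- the sum
  set S : Ω → ℝ := fun ω => ∑ p : (Fin n × Fin (L - 1)), ((p.2 : ℕ) + 1 : ℝ) * γ p ω with hSdef
  have hSm : Measurable S :=
    Finset.measurable_sum Finset.univ (fun p _ => (hγmeas p).const_mul _)
  -- a.s. positivity
  have hpos : ∀ p : (Fin n × Fin (L - 1)), ∀ᵐ ω ∂P, 0 < γ p ω := by
    intro p
    rw [ae_iff]
    have hset : {ω | ¬ 0 < γ p ω} = γ p ⁻¹' (Iic 0) := by
      ext ω; simp [not_lt]
    rw [hset, ← Measure.map_apply (hγmeas p) measurableSet_Iic, hlaw p]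
    have h1 : expMeasure (((p.2 : ℕ) + 1) * d) (Iio 0) = 0 := by
      rw [expMeasure, gammaMeasure, withDensity_apply _ measurableSet_Iio]
      exact lintegral_exponentialPDF_of_nonpos le_rfl
    have h2 : expMeasure (((p.2 : ℕ) + 1) * d) {(0:ℝ)} = 0 := by
      rw [expMeasure, gammaMeasure]
      exact (withDensity_absolutelyContinuous volume _) Real.volume_singleton
    have : (Set.Iic (0:ℝ)) = Set.Iio 0 ∪ {0} := by
      ext x; simp [le_iff_lt_or_eq]
    rw [this]
    exact measure_union_null h1 h2
  have hne : Nonempty (Fin n × Fin (L - 1)) := by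
    constructor
    exact ⟨⟨0, by omega⟩, ⟨0, by omega⟩⟩
  have hSpos : ∀ᵐ ω ∂P, 0 < S ω := by
    filter_upwards [(ae_all_iff).2 hpos] with ω hω
    refine Finset.sum_pos (fun p _ => mul_pos (hc p) (hω p)) ?_
    exact Finset.univ_nonempty
  -- mgf computation
  have hmgf : ∀ t : ℝ, 0 < t →
      mgf S P (-t) = (d / (d + t)) ^ (n * (L - 1)) := by
    intro t ht
    set X : (Fin n × Fin (L - 1)) → Ω → ℝ := fun p => (fun x => ((p.2 : ℕ) + 1 : ℝ) * x) ∘ γ p with hXdef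
    have hXmeas : ∀ p, Measurable (X p) := fun p => (hγmeas p).const_mul _
    have hXindep : iIndepFun X P :=
      hindep.comp _ (fun p => (measurable_id.const_mul _))
    have hsum : S = ∑ p : (Fin n × Fin (L - 1)), X p := by
      funext ω
      rw [Finset.sum_apply]
      rfl
    rw [hsum, hXindep.mgf_sum hXmeas Finset.univ]
    have hval : ∀ p : (Fin n × Fin (L - 1)), mgf (X p) P (-t) = d / (d + t) := by
      intro p
      have hcp := hc p
      have hrd : (0:ℝ) < ((p.2 : ℕ) + 1) * d := mul_pos hcp hd
      have h1 : mgf (X p) P (-t)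
          = ∫ x, Real.exp ((-t * ((p.2 : ℕ) + 1)) * x) ∂(Measure.map (γ p) P) := by
        rw [mgf, integral_map (hγmeas p).aemeasurable]
        · congr 1; funext ω
          show Real.exp (-t * (((p.2 : ℕ) + 1 : ℝ) * γ p ω)) = _
          congr 1; ring
        · exact (Continuous.aestronglyMeasurable (by continuity))
      rw [h1, hlaw p, crideAux_integral_exp_expMeasure hrd (by nlinarith)]
      have hdt : d + t ≠ 0 := by positivity
      have hcp' : ((p.2 : ℕ) + 1 : ℝ) ≠ 0 := ne_of_gt hcp
      field_simp
      ring_nf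
      rw [← add_mul, mul_inv_cancel₀ hdt]
    rw [Finset.prod_congr rfl (fun p _ => hval p), Finset.prod_const, Finset.card_univ, hcard]
  -- moments of 1/S
  have hmom : ∀ a : ℝ, 0 < a → Real.Gamma a = 1 →
      ∫⁻ ω, ENNReal.ofReal (S ω ^ (-a)) ∂P
        = ∫⁻ t in Ioi (0:ℝ), ENNReal.ofReal (t ^ (a - 1) * mgf S P (-t)) := by
    intro a ha hGa
    have h := crideAux_moment P hSm hSpos ha
    rwa [hGa, ENNReal.ofReal_one, one_mul] at h
  have hdpow : (d:ℝ) ^ (n * (L - 1)) = d ^ kR := by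
    rw [hkR, Real.rpow_natCast]
  have hm1 : ∫⁻ ω, ENNReal.ofReal (S ω ^ (-(1:ℝ))) ∂P = ENNReal.ofReal (d / (kR - 1)) := by
    rw [hmom 1 one_pos Real.Gamma_one]
    have hstep : ∫⁻ t in Ioi (0:ℝ), ENNReal.ofReal (t ^ ((1:ℝ) - 1) * mgf S P (-t))
        = ∫⁻ t in Ioi (0:ℝ), ENNReal.ofReal (d ^ (n * (L - 1)) * (d + t) ^ (-kR)) := by
      refine lintegral_congr_ae ?_
      filter_upwards [ae_restrict_mem measurableSet_Ioi] with t ht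
      have ht' : (0:ℝ) < t := ht
      have hdt : (0:ℝ) < d + t := by positivity
      congr 1
      rw [sub_self, Real.rpow_zero, one_mul, hmgf t ht', div_pow, Real.rpow_neg hdt.le,
        hkR, Real.rpow_natCast, div_eq_mul_inv]
    rw [hstep]
    have hB := crideAux_B1 hd (show (1:ℝ) < kR by linarith)
    have hint : IntegrableOn (fun t : ℝ => d ^ (n * (L - 1)) * (d + t) ^ (-kR)) (Ioi 0) :=
      hB.1.const_mul _
    rw [← ofReal_integral_eq_lintegral_ofReal hint ?_]
    · congr 1
      rw [integral_const_mul, hB.2]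
      have hde : (d:ℝ) ^ (n * (L - 1)) * d ^ ((1:ℝ) - kR) = d := by
        rw [hdpow, ← Real.rpow_add hd]
        norm_num
      rw [← mul_div_assoc, hde]
    · filter_upwards [ae_restrict_mem measurableSet_Ioi] with t ht
      have ht' : (0:ℝ) < t := ht
      have hdt : (0:ℝ) ≤ d + t := by positivity
      positivity
  have hm2 : ∫⁻ ω, ENNReal.ofReal (S ω ^ (-(2:ℝ))) ∂P
      = ENNReal.ofReal (d ^ 2 / ((kR - 1) * (kR - 2))) := by
    rw [hmom 2 two_pos Real.Gamma_two]
    have hstep : ∫⁻ t in Ioi (0:ℝ), ENNReal.ofReal (t ^ ((2:ℝ) - 1) * mgf S P (-t))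
        = ∫⁻ t in Ioi (0:ℝ), ENNReal.ofReal (d ^ (n * (L - 1)) * (t * (d + t) ^ (-kR))) := by
      refine lintegral_congr_ae ?_
      filter_upwards [ae_restrict_mem measurableSet_Ioi] with t ht
      have ht' : (0:ℝ) < t := ht
      have hdt : (0:ℝ) < d + t := by positivity
      congr 1
      rw [show ((2:ℝ) - 1) = 1 by norm_num, Real.rpow_one, hmgf t ht', div_pow,
        Real.rpow_neg hdt.le, hkR, Real.rpow_natCast, div_eq_mul_inv]
      ring
    rw [hstep]
    have hB := crideAux_B2 hd (show (2:ℝ) < kR by linarith)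
    have hint : IntegrableOn (fun t : ℝ => d ^ (n * (L - 1)) * (t * (d + t) ^ (-kR))) (Ioi 0) :=
      hB.1.const_mul _
    rw [← ofReal_integral_eq_lintegral_ofReal hint ?_]
    · congr 1
      rw [integral_const_mul, hB.2]
      have hde : (d:ℝ) ^ (n * (L - 1)) * d ^ ((2:ℝ) - kR) = d ^ 2 := by
        rw [hdpow, ← Real.rpow_add hd, show (kR + (2 - kR) : ℝ) = 2 by ring,
          show (2:ℝ) = ((2:ℕ):ℝ) by norm_num, Real.rpow_natCast]
      rw [← mul_div_assoc, hde]
    · filter_upwards [ae_restrict_mem measurableSet_Ioi] with t ht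
      have ht' : (0:ℝ) < t := ht
      have hdt : (0:ℝ) ≤ d + t := by positivity
      positivity
  -- the estimator
  have hfm : AEStronglyMeasurable (fun ω => (kR - 1) / S ω) P :=
    (measurable_const.div hSm).aestronglyMeasurable
  have hkR1' : (0:ℝ) ≤ kR - 1 := hkR1.le
  have hae1 : (fun ω => ENNReal.ofReal ((kR - 1) / S ω))
      =ᵐ[P] fun ω => ENNReal.ofReal (kR - 1) * ENNReal.ofReal (S ω ^ (-(1:ℝ))) := by
    filter_upwards [hSpos] with ω hω
    rw [Real.rpow_neg hω.le, Real.rpow_one, div_eq_mul_inv, ENNReal.ofReal_mul hkR1']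
  have hlint1 : ∫⁻ ω, ENNReal.ofReal ((kR - 1) / S ω) ∂P
      = ENNReal.ofReal (kR - 1) * ENNReal.ofReal (d / (kR - 1)) := by
    rw [lintegral_congr_ae hae1,
      lintegral_const_mul _ ((hSm.pow_const _).ennreal_ofReal), hm1]
  have hnn1 : 0 ≤ᵐ[P] fun ω => (kR - 1) / S ω := by
    filter_upwards [hSpos] with ω hω
    exact div_nonneg hkR1' hω.le
  have hint1 : Integrable (fun ω => (kR - 1) / S ω) P := by
    refine ⟨hfm, ?_⟩
    rw [hasFiniteIntegral_iff_norm]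
    have : ∫⁻ ω, ENNReal.ofReal ‖(kR - 1) / S ω‖ ∂P
        = ∫⁻ ω, ENNReal.ofReal ((kR - 1) / S ω) ∂P := by
      refine lintegral_congr_ae ?_
      filter_upwards [hnn1] with ω hω
      rw [Real.norm_eq_abs, abs_of_nonneg hω]
    rw [this, hlint1]
    exact ENNReal.mul_lt_top ENNReal.ofReal_lt_top ENNReal.ofReal_lt_top
  have hEf : ∫ ω, (kR - 1) / S ω ∂P = d := by
    rw [integral_eq_lintegral_of_nonneg_ae hnn1 hfm, hlint1,
      ← ENNReal.ofReal_mul hkR1', ENNReal.toReal_ofReal (by positivity)]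
    field_simp
  -- second moment
  have hsqm : AEStronglyMeasurable (fun ω => ((kR - 1) / S ω) ^ 2) P :=
    ((measurable_const.div hSm).pow_const 2).aestronglyMeasurable
  have hae2 : (fun ω => ENNReal.ofReal (((kR - 1) / S ω) ^ 2))
      =ᵐ[P] fun ω => ENNReal.ofReal ((kR - 1) ^ 2) * ENNReal.ofReal (S ω ^ (-(2:ℝ))) := by
    filter_upwards [hSpos] with ω hω
    rw [Real.rpow_neg hω.le, show (2:ℝ) = ((2:ℕ):ℝ) by norm_num, Real.rpow_natCast,
      div_pow, div_eq_mul_inv, ENNReal.ofReal_mul (sq_nonneg _)]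
  have hlint2 : ∫⁻ ω, ENNReal.ofReal (((kR - 1) / S ω) ^ 2) ∂P
      = ENNReal.ofReal ((kR - 1) ^ 2) * ENNReal.ofReal (d ^ 2 / ((kR - 1) * (kR - 2))) := by
    rw [lintegral_congr_ae hae2,
      lintegral_const_mul _ ((hSm.pow_const _).ennreal_ofReal), hm2]
  have hint2 : Integrable (fun ω => ((kR - 1) / S ω) ^ 2) P := by
    refine ⟨hsqm, ?_⟩
    rw [hasFiniteIntegral_iff_norm]
    have : ∫⁻ ω, ENNReal.ofReal ‖((kR - 1) / S ω) ^ 2‖ ∂P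
        = ∫⁻ ω, ENNReal.ofReal (((kR - 1) / S ω) ^ 2) ∂P := by
      refine lintegral_congr_ae (ae_of_all _ fun ω => ?_)
      simp only [Real.norm_eq_abs, abs_of_nonneg (sq_nonneg ((kR - 1) / S ω))]
    rw [this, hlint2]
    exact ENNReal.mul_lt_top ENNReal.ofReal_lt_top ENNReal.ofReal_lt_top
  have hMem : MemLp (fun ω => (kR - 1) / S ω) 2 P :=
    (memLp_two_iff_integrable_sq hfm).2 hint2
  have hEf2 : ∫ ω, ((kR - 1) / S ω) ^ 2 ∂P = (kR - 1) * d ^ 2 / (kR - 2) := by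
    rw [integral_eq_lintegral_of_nonneg_ae (ae_of_all _ fun ω => sq_nonneg _) hsqm, hlint2,
      ← ENNReal.ofReal_mul (sq_nonneg _), ENNReal.toReal_ofReal (by positivity)]
    have hne1 : kR - 1 ≠ 0 := ne_of_gt hkR1
    have hne2 : kR - 2 ≠ 0 := ne_of_gt hkR2
    field_simp
  refine ⟨hMem, hEf, ?_⟩
  rw [variance_eq_sub hMem]
  have hpow : (fun ω => (kR - 1) / S ω) ^ 2 = fun ω => ((kR - 1) / S ω) ^ 2 := by
    funext ω; simp [Pi.pow_apply]
  have hμ2 : P[(fun ω => (kR - 1) / S ω) ^ 2] = (kR - 1) * d ^ 2 / (kR - 2) := by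
    rw [hpow]; exact hEf2
  rw [hμ2, hEf]
  have hne1 : kR - 1 ≠ 0 := ne_of_gt hkR1
  have hne2 : kR - 2 ≠ 0 := ne_of_gt hkR2
  field_simp
  ring
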